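/- The coherence of a Kronecker-structured subspace equals the product of the coherences of the factor subspaces: μ(A⊗B) = μ(A)·μ(B). -/
import Mathlib


open Matrix
open scoped Kronecker

/-- Orthogonal projection operator onto the column space of `M`. -/
noncomputable def proj {I J : Type*} [Fintype I] [Fintype J] [DecidableEq J]
    (M : Matrix I J ℝ) : Matrix I I ℝ :=
  M * (Mᵀ * M)⁻¹ * Mᵀ

/-- Coherence of (the column space of) a matrix `M`:
`μ(M) = (m/n) · maxⱼ ‖Uᴹ eⱼ‖₂²`. -/
noncomputable def coherence {I J : Type*} [Fintype I] [Fintype J] [DecidableEq J]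
    [Nonempty I] (M : Matrix I J ℝ) : ℝ :=
  ((Fintype.card I : ℝ) / (Fintype.card J : ℝ)) *
    Finset.univ.sup' Finset.univ_nonempty (fun j : I => ∑ i, (proj M i j) ^ 2)

lemma proj_kronecker {I₁ J₁ I₂ J₂ : Type*}
    [Fintype I₁] [Fintype J₁] [Fintype I₂] [Fintype J₂]
    [DecidableEq J₁] [DecidableEq J₂]
    (A : Matrix I₁ J₁ ℝ) (B : Matrix I₂ J₂ ℝ) :
    proj (A ⊗ₖ B) = proj A ⊗ₖ proj B := by
  unfold proj
  rw [← kroneckerMap_transpose, ← mul_kronecker_mul, inv_kronecker,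
    mul_kronecker_mul, mul_kronecker_mul]

lemma sup'_prod_mul {α β : Type*} [Fintype α] [Fintype β] [Nonempty α] [Nonempty β]
    (f : α → ℝ) (g : β → ℝ) (hf : ∀ a, 0 ≤ f a) (hg : ∀ b, 0 ≤ g b) :
    Finset.univ.sup' Finset.univ_nonempty (fun p : α × β => f p.1 * g p.2) =
      Finset.univ.sup' Finset.univ_nonempty f *
        Finset.univ.sup' Finset.univ_nonempty g := by
  apply le_antisymm
  · apply Finset.sup'_le
    rintro ⟨a, b⟩ -
    have hfa : f a ≤ Finset.univ.sup' Finset.univ_nonempty f :=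
      Finset.le_sup' f (Finset.mem_univ a)
    have hgb : g b ≤ Finset.univ.sup' Finset.univ_nonempty g :=
      Finset.le_sup' g (Finset.mem_univ b)
    exact mul_le_mul hfa hgb (hg b) ((hf a).trans hfa)
  · obtain ⟨a, -, ha⟩ := Finset.exists_mem_eq_sup' Finset.univ_nonempty f
    obtain ⟨b, -, hb⟩ := Finset.exists_mem_eq_sup' Finset.univ_nonempty g
    rw [ha, hb]
    exact Finset.le_sup' (fun p : α × β => f p.1 * g p.2) (Finset.mem_univ (a, b))

/-- The coherence of a Kronecker-structured subspace equals the product of the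
coherences of the factor subspaces: `μ(A ⊗ B) = μ(A) · μ(B)`. -/
theorem coherence_kronecker {I₁ J₁ I₂ J₂ : Type*}
    [Fintype I₁] [Fintype J₁] [Fintype I₂] [Fintype J₂]
    [DecidableEq J₁] [DecidableEq J₂] [Nonempty I₁] [Nonempty I₂]
    (A : Matrix I₁ J₁ ℝ) (B : Matrix I₂ J₂ ℝ)
    (hA : IsUnit (Aᵀ * A).det) (hB : IsUnit (Bᵀ * B).det) :
    coherence (A ⊗ₖ B) = coherence A * coherence B := by
  unfold coherence
  have hs : (fun j : I₁ × I₂ => ∑ i, (proj (A ⊗ₖ B) i j) ^ 2) =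
      fun j : I₁ × I₂ =>
        (∑ i, (proj A i j.1) ^ 2) * (∑ i, (proj B i j.2) ^ 2) := by
    funext j
    rw [proj_kronecker, Fintype.sum_prod_type]
    simp only [kroneckerMap_apply, mul_pow]
    rw [← Finset.sum_mul_sum]
  rw [hs, sup'_prod_mul (fun a => ∑ i, (proj A i a) ^ 2) (fun b => ∑ i, (proj B i b) ^ 2) (fun a => Finset.sum_nonneg fun i _ => sq_nonneg _)
      (fun b => Finset.sum_nonneg fun i _ => sq_nonneg _)]
  simp only [Fintype.card_prod, Nat.cast_mul]
  ring
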